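/- Assume x̄ ≠ 0 and ε̃ ≥ 0, and set β = √(1 + ε̃/(3‖x̄‖²)). Then for every x ∈ ℝⁿ, ∇g(x) = 0 if and only if x = 0, or x = β·x̄, or x = −β·x̄, or (⟨x̄,x⟩ = 0 and ‖x‖² = (‖x̄‖² + ε̃)/3). -/

import Mathlib

open scoped RealInnerProductSpace BigOperators

/-- The expectation `g` of the noisy phase-retrieval objective (up to an additive constant). -/
noncomputable def gObj (n : ℕ) (xbar : EuclideanSpace ℝ (Fin n)) (εt : ℝ)
    (x : EuclideanSpace ℝ (Fin n)) : ℝ :=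
  (3 / 4) * (‖x‖ ^ 4 + ‖xbar‖ ^ 4) - (1 / 2) * ‖xbar‖ ^ 2 * ‖x‖ ^ 2 - ⟪xbar, x⟫ ^ 2
    - (εt / 2) * (‖x‖ ^ 2 - ‖xbar‖ ^ 2)

/-- The gradient of `g`. -/
noncomputable def gGrad (n : ℕ) (xbar : EuclideanSpace ℝ (Fin n)) (εt : ℝ)
    (x : EuclideanSpace ℝ (Fin n)) : EuclideanSpace ℝ (Fin n) :=
  (3 * ‖x‖ ^ 2) • x - (2 * ⟪xbar, x⟫) • xbar - (‖xbar‖ ^ 2 + εt) • x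

/-- characterization of the critical points of `g`. -/
theorem stmt7 (n : ℕ) (xbar : EuclideanSpace ℝ (Fin n)) (hxbar : xbar ≠ 0)
    (εt : ℝ) (hεt : 0 ≤ εt) (β : ℝ) (hβ : β = Real.sqrt (1 + εt / (3 * ‖xbar‖ ^ 2))) :
    ∀ x : EuclideanSpace ℝ (Fin n),
      gGrad n xbar εt x = 0 ↔
        x = 0 ∨ x = β • xbar ∨ x = -(β • xbar) ∨
          (⟪xbar, x⟫ = 0 ∧ ‖x‖ ^ 2 = (‖xbar‖ ^ 2 + εt) / 3) := by
  intro x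
  have hnb : (0:ℝ) < ‖xbar‖ := norm_pos_iff.mpr hxbar
  have hnb2 : (0:ℝ) < ‖xbar‖ ^ 2 := by positivity
  have hβ2 : β ^ 2 = 1 + εt / (3 * ‖xbar‖ ^ 2) := by
    rw [hβ, Real.sq_sqrt]; positivity
  have hβ0 : 0 ≤ β := by rw [hβ]; exact Real.sqrt_nonneg _
  have hβ2' : 3 * β ^ 2 * ‖xbar‖ ^ 2 = 3 * ‖xbar‖ ^ 2 + εt := by
    field_simp [hβ2]; linear_combination (3 * ‖xbar‖ ^ 2) * hβ2 + div_mul_cancel₀ εt (show (3:ℝ) * ‖xbar‖ ^ 2 ≠ 0 from (mul_pos (by norm_num) hnb2).ne')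
  have hself : ⟪xbar, xbar⟫ = ‖xbar‖ ^ 2 := real_inner_self_eq_norm_sq xbar
  constructor
  · intro h
    simp only [gGrad] at h
    have h' : (3 * ‖x‖ ^ 2 - (‖xbar‖ ^ 2 + εt)) • x = (2 * ⟪xbar, x⟫) • xbar := by
      linear_combination (norm := module) h
    have hinner : (3 * ‖x‖ ^ 2 - (‖xbar‖ ^ 2 + εt)) * ⟪xbar, x⟫
        = (2 * ⟪xbar, x⟫) * ‖xbar‖ ^ 2 := by
      have h2 := congrArg (fun y => ⟪xbar, y⟫) h'
      simp only [real_inner_smul_right, hself] at h2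
      exact h2
    have hsplit : ⟪xbar, x⟫ * (3 * ‖x‖ ^ 2 - (3 * ‖xbar‖ ^ 2 + εt)) = 0 := by
      nlinarith [hinner]
    rcases mul_eq_zero.mp hsplit with hip | heq
    · rw [hip] at h'
      simp only [mul_zero, zero_smul] at h'
      rcases smul_eq_zero.mp h' with hc | hx0
      · right; right; right
        exact ⟨hip, by linarith⟩
      · left; exact hx0
    · have hx2 : 3 * ‖x‖ ^ 2 = 3 * ‖xbar‖ ^ 2 + εt := by linarith
      have hcoef : 3 * ‖x‖ ^ 2 - (‖xbar‖ ^ 2 + εt) = 2 * ‖xbar‖ ^ 2 := by linarith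
      rw [hcoef] at h'
      set t : ℝ := ⟪xbar, x⟫ / ‖xbar‖ ^ 2 with ht
      have hx : x = t • xbar := by
        have h2 : (2 * ‖xbar‖ ^ 2) • x = (2 * ‖xbar‖ ^ 2) • (t • xbar) := by
          rw [h', smul_smul]
          congr 1
          field_simp [ht]
          rw [ht]; field_simp
        exact smul_right_injective _ (by positivity) h2
      have hnx : ‖x‖ ^ 2 = t ^ 2 * ‖xbar‖ ^ 2 := by
        rw [hx, norm_smul]
        simp [mul_pow, sq_abs]
      have ht2 : t ^ 2 = β ^ 2 := by nlinarith
      rcases sq_eq_sq_iff_eq_or_eq_neg.mp ht2 with h1 | h1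
      · right; left; rw [hx, h1]
      · right; right; left; rw [hx, h1, neg_smul]
  · rintro (rfl | rfl | rfl | ⟨hip, hnx⟩)
    · simp [gGrad]
    · simp only [gGrad, norm_smul, real_inner_smul_right, hself, mul_pow,
        Real.norm_eq_abs, sq_abs]
      match_scalars
      linear_combination β * hβ2'
    · simp only [gGrad, norm_neg, norm_smul, inner_neg_right, real_inner_smul_right, hself,
        mul_pow, Real.norm_eq_abs, sq_abs]
      match_scalars
      linear_combination (-β) * hβ2'
    · simp only [gGrad, hip, mul_zero, zero_smul, sub_zero]
      rw [hnx]
      match_scalars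
      field_simp
      ring
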